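/- Let f, b : (Fin N → ℤ) → WithBot ℕ have finite supports F and B, with umbra indicators u_f and u_b. Then for every x ∈ ℤ^N: x belongs to the Minkowski sum F + B = {x_F + x_B | x_F ∈ F, x_B ∈ B} if and only if there exists t ∈ ℤ with (u_f ⋆ u_b)(x, t) ≥ 1; equivalently, x ∉ F + B if and only if (u_f ⋆ u_b)(x, t) = 0 for all t ∈ ℤ. -/
import Mathlib


open scoped Pointwise

open scoped Classical in
/-- The umbra indicator of an image `f : ℤ^N → WithBot ℕ`: `u_f (x, t) = 1` if `t ≥ 0`
and `f x` equals the natural number `t`, and `0` otherwise. -/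
noncomputable def umbra {N : ℕ} (f : (Fin N → ℤ) → WithBot ℕ) :
    (Fin N → ℤ) × ℤ → ℝ :=
  fun p => if ∃ n : ℕ, (n : ℤ) = p.2 ∧ f p.1 = (n : WithBot ℕ) then 1 else 0

/-- Discrete linear convolution of functions on `ℤ^N × ℤ`:
`(u ⋆ v)(x, t) = ∑_{y, s} u (x - y, t - s) * v (y, s)`. -/
noncomputable def conv {N : ℕ} (u v : (Fin N → ℤ) × ℤ → ℝ) :
    (Fin N → ℤ) × ℤ → ℝ :=
  fun p => ∑ᶠ (y : Fin N → ℤ), ∑ᶠ (s : ℤ), u (p.1 - y, p.2 - s) * v (y, s)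

open scoped Classical

lemma inner_sum_eq {N : ℕ} (f b : (Fin N → ℤ) → WithBot ℕ) (x y : Fin N → ℤ) (t : ℤ) :
    (∑ᶠ s : ℤ, umbra f (x - y, t - s) * umbra b (y, s)) =
    if ∃ nF nB : ℕ, f (x - y) = (nF : WithBot ℕ) ∧ b y = (nB : WithBot ℕ) ∧
        (nF : ℤ) + nB = t then 1 else 0 := by
  by_cases hb : b y = ⊥
  · have h0 : ∀ s : ℤ, umbra f (x - y, t - s) * umbra b (y, s) = 0 := by
      intro s
      have : umbra b (y, s) = 0 := by
        unfold umbra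
        rw [if_neg]
        rintro ⟨n, -, hn⟩
        rw [hb] at hn
        exact (WithBot.bot_ne_coe) hn
      rw [this, mul_zero]
    rw [finsum_congr h0, finsum_zero, if_neg]
    rintro ⟨nF, nB, -, hnB, -⟩
    rw [hb] at hnB
    exact (WithBot.bot_ne_coe) hnB
  · obtain ⟨nB, hnB⟩ := Option.ne_none_iff_exists.mp hb
    have hnB : b y = (nB : WithBot ℕ) := hnB.symm
    have hsingle : ∀ s : ℤ, s ≠ (nB : ℤ) →
        umbra f (x - y, t - s) * umbra b (y, s) = 0 := by
      intro s hs
      have : umbra b (y, s) = 0 := by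
        unfold umbra
        rw [if_neg]
        rintro ⟨n, hns, hn⟩
        rw [hnB] at hn
        have : n = nB := by exact_mod_cast hn.symm
        exact hs (by rw [← this]; exact hns.symm)
      rw [this, mul_zero]
    rw [finsum_eq_single _ ((nB : ℤ)) hsingle]
    have hub : umbra b (y, (nB : ℤ)) = 1 := by
      unfold umbra
      rw [if_pos ⟨nB, rfl, hnB⟩]
    rw [hub, mul_one]
    unfold umbra
    refine if_congr ?_ rfl rfl
    constructor
    · rintro ⟨n, hns, hn⟩
      exact ⟨n, nB, hn, hnB, by omega⟩
    · rintro ⟨nF, nB', hnF, hnB', ht⟩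
      have : nB' = nB := by
        rw [hnB] at hnB'
        exact_mod_cast hnB'.symm
      subst this
      exact ⟨nF, by omega, hnF⟩

/-- A point `x` lies in the Minkowski sum `F + B` of the supports of `f` and `b` if and
only if `(u_f ⋆ u_b)(x, t) ≥ 1` for some `t : ℤ`; equivalently, `x ∉ F + B` iff
`(u_f ⋆ u_b)(x, t) = 0` for all `t : ℤ`. -/
theorem mem_minkowski_iff_conv_pos (N : ℕ) (f b : (Fin N → ℤ) → WithBot ℕ)
    (hF : {x : Fin N → ℤ | f x ≠ ⊥}.Finite) (hB : {y : Fin N → ℤ | b y ≠ ⊥}.Finite)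
    (x : Fin N → ℤ) :
    (x ∈ {x : Fin N → ℤ | f x ≠ ⊥} + {y : Fin N → ℤ | b y ≠ ⊥} ↔
      ∃ t : ℤ, 1 ≤ conv (umbra f) (umbra b) (x, t)) ∧
    (x ∉ {x : Fin N → ℤ | f x ≠ ⊥} + {y : Fin N → ℤ | b y ≠ ⊥} ↔
      ∀ t : ℤ, conv (umbra f) (umbra b) (x, t) = 0) := by
  set P : ℤ → (Fin N → ℤ) → Prop := fun t y =>
    ∃ nF nB : ℕ, f (x - y) = (nF : WithBot ℕ) ∧ b y = (nB : WithBot ℕ) ∧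
      (nF : ℤ) + nB = t with hP
  have hconv : ∀ t : ℤ, conv (umbra f) (umbra b) (x, t) =
      ∑ᶠ y : Fin N → ℤ, (if P t y then (1 : ℝ) else 0) := by
    intro t
    exact finsum_congr fun y => inner_sum_eq f b x y t
  have hsupp : ∀ t : ℤ, (Function.support fun y => if P t y then (1 : ℝ) else 0) ⊆
      {y : Fin N → ℤ | b y ≠ ⊥} := by
    intro t y hy
    simp only [Function.mem_support, ne_eq, ite_eq_right_iff, not_forall] at hy
    obtain ⟨⟨nF, nB, hnF, hnB, ht⟩, -⟩ := hy
    simp only [Set.mem_setOf_eq, hnB]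
    exact WithBot.coe_ne_bot
  have hfin : ∀ t : ℤ, (Function.support fun y => if P t y then (1 : ℝ) else 0).Finite :=
    fun t => hB.subset (hsupp t)
  have hnn : ∀ (t : ℤ) (y : Fin N → ℤ), (0 : ℝ) ≤ if P t y then 1 else 0 := by
    intro t y; split <;> norm_num
  have hmem : x ∈ {x : Fin N → ℤ | f x ≠ ⊥} + {y : Fin N → ℤ | b y ≠ ⊥} ↔
      ∃ t : ℤ, 1 ≤ conv (umbra f) (umbra b) (x, t) := by
    constructor
    · rintro ⟨xF, hxF, xB, hxB, hxx⟩
      obtain ⟨nF, hnF⟩ := Option.ne_none_iff_exists.mp hxF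
      obtain ⟨nB, hnB⟩ := Option.ne_none_iff_exists.mp hxB
      refine ⟨(nF : ℤ) + nB, ?_⟩
      rw [hconv]
      have hPy : P ((nF : ℤ) + nB) xB := by
        refine ⟨nF, nB, ?_, hnB.symm, rfl⟩
        rw [show x - xB = xF from by rw [← hxx]; exact add_sub_cancel_right xF xB]
        exact hnF.symm
      calc (1 : ℝ) = if P ((nF : ℤ) + nB) xB then 1 else 0 := by rw [if_pos hPy]
        _ ≤ _ := single_le_finsum xB (hfin _) (hnn _)
    · rintro ⟨t, ht⟩
      rw [hconv] at ht
      by_contra hx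
      have h0 : ∀ y : Fin N → ℤ, (if P t y then (1 : ℝ) else 0) = 0 := by
        intro y
        rw [if_neg]
        rintro ⟨nF, nB, hnF, hnB, -⟩
        exact hx ⟨x - y, by simp [hnF], y, by simp [hnB], sub_add_cancel x y⟩
      rw [finsum_congr h0, finsum_zero] at ht
      linarith
  refine ⟨hmem, ?_⟩
  constructor
  · intro hx t
    rw [hconv]
    have h0 : ∀ y : Fin N → ℤ, (if P t y then (1 : ℝ) else 0) = 0 := by
      intro y
      rw [if_neg]
      rintro ⟨nF, nB, hnF, hnB, -⟩
      exact hx ⟨x - y, by simp [hnF], y, by simp [hnB], sub_add_cancel x y⟩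
    rw [finsum_congr h0, finsum_zero]
  · intro h0
    rw [hmem]
    rintro ⟨t, ht⟩
    rw [h0 t] at ht
    linarith
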